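/- Let N ≥ 2, α ∈ (0,2), β := 2(α−1)/α, κ_α := 2^{1−α}Γ(1−α/2)/Γ(α/2), Ω^# ⊂ ℝ^N the open ball of measure |Ω| centered at the origin, and f a measurable function on a bounded open set Ω with |Ω| = |Ω^#|. Let v(x,z) be of class C² on C_{Ω^#} := Ω^# × (0,∞), continuous on the closure, radially symmetric and radially nonincreasing in x for each z ≥ 0, satisfying z^β ∂²_z v + Δ_x v = 0 in C_{Ω^#} and v = 0 on ∂Ω^# × [0,∞). Then V(s,z) := ∫_0^s v*(σ,z) dσ satisfies z^β ∂²V/∂z² + N² ω_N^{2/N} s^{2−2/N} ∂²V/∂s² = 0 for all s ∈ (0,|Ω|) and z ∈ (0,∞). If moreover lim_{z→0⁺} ∂_z v(x,z) = −α^{α−1} κ_α f^#(x) uniformly in x ∈ Ω^#, then lim_{z→0⁺} ∂V/∂z(s,z) = −α^{α−1} κ_α ∫_0^s f*(σ) dσ for every s ∈ (0,|Ω|). -/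

import Mathlib

open MeasureTheory Filter Set

noncomputable section

abbrev Euc (N : ℕ) := EuclideanSpace ℝ (Fin N)

/-- Decreasing rearrangement of `g` on `E`:
`g*(s) = sup {t ≥ 0 : |{x ∈ E : |g x| > t}| > s}`. -/
def rearr {N : ℕ} (E : Set (Euc N)) (g : Euc N → ℝ) (s : ℝ) : ℝ :=
  sSup {t : ℝ | 0 ≤ t ∧ ENNReal.ofReal s < volume {x | x ∈ E ∧ t < |g x|}}

/-- Measure of the unit ball of `ℝ^N`. -/
def omegaN (N : ℕ) : ℝ := (volume (Metric.ball (0 : Euc N) 1)).toReal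

/-- Radius of the ball centered at the origin with the same measure as `Ω`. -/
def ballRad {N : ℕ} (Ω : Set (Euc N)) : ℝ := ((volume Ω).toReal / omegaN N) ^ ((N : ℝ)⁻¹)

/-- `Ω^#`: the ball centered at the origin with the same measure as `Ω`. -/
def symmBall {N : ℕ} (Ω : Set (Euc N)) : Set (Euc N) := Metric.ball 0 (ballRad Ω)

/-- Schwarz rearrangement `f^#(x) = f*(ω_N |x|^N)`. -/
def schwarz {N : ℕ} (Ω : Set (Euc N)) (f : Euc N → ℝ) (x : Euc N) : ℝ :=
  rearr Ω f (omegaN N * ‖x‖ ^ N)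

/-- `κ_α = 2^{1-α} Γ(1-α/2) / Γ(α/2)`. -/
def kappa (α : ℝ) : ℝ := (2 : ℝ) ^ (1 - α) * Real.Gamma (1 - α / 2) / Real.Gamma (α / 2)

/-- Laplacian of `v` with respect to the `x` variables. -/
def lapx {N : ℕ} (v : Euc N → ℝ → ℝ) (x : Euc N) (z : ℝ) : ℝ :=
  ∑ i : Fin N, deriv (deriv fun t : ℝ => v (x + t • EuclideanSpace.single i (1 : ℝ)) z) 0

/-- `v` is radially symmetric and radially nonincreasing in `x` for each `z ≥ 0`. -/
def RadialDecr {N : ℕ} (v : Euc N → ℝ → ℝ) : Prop :=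
  ∀ z : ℝ, 0 ≤ z → ∀ x x' : Euc N, ‖x‖ ≤ ‖x'‖ → v x' z ≤ v x z

section Aux
variable {N : ℕ}

lemma omegaN_pos (hN : 0 < N) : 0 < omegaN N := by
  have : Nonempty (Fin N) := ⟨⟨0, hN⟩⟩
  exact ENNReal.toReal_pos (Metric.measure_ball_pos volume _ one_pos).ne' measure_ball_lt_top.ne

lemma volume_ball_eq (hN : 0 < N) {R : ℝ} (hR : 0 ≤ R) :
    volume (Metric.ball (0 : Euc N) R) = ENNReal.ofReal (omegaN N * R ^ N) := by
  have : Nonempty (Fin N) := ⟨⟨0, hN⟩⟩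
  rw [Measure.addHaar_ball _ _ hR, finrank_euclideanSpace_fin,
    ENNReal.ofReal_mul (omegaN_pos hN).le, mul_comm, omegaN,
    ENNReal.ofReal_toReal measure_ball_lt_top.ne]

lemma volume_closedBall_eq (hN : 0 < N) {R : ℝ} (hR : 0 ≤ R) :
    volume (Metric.closedBall (0 : Euc N) R) = ENNReal.ofReal (omegaN N * R ^ N) := by
  have : Nonempty (Fin N) := ⟨⟨0, hN⟩⟩
  rw [Measure.addHaar_closedBall _ _ hR, finrank_euclideanSpace_fin,
    ENNReal.ofReal_mul (omegaN_pos hN).le, mul_comm, omegaN,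
    ENNReal.ofReal_toReal measure_ball_lt_top.ne]

lemma norm_smul_unit {e : Euc N} (he : ‖e‖ = 1) {c : ℝ} (hc : 0 ≤ c) : ‖c • e‖ = c := by
  rw [norm_smul, he, Real.norm_eq_abs, abs_of_nonneg hc, mul_one]

/-- Rearrangement of a radial nonincreasing function. -/
lemma rearr_radial (hN : 0 < N) {r : ℝ} (hr : 0 < r) {g : Euc N → ℝ}
    (hmono : ∀ x x' : Euc N, ‖x‖ ≤ ‖x'‖ → g x' ≤ g x)
    (hgcont : ContinuousOn g (Metric.ball 0 r))
    {e : Euc N} (he : ‖e‖ = 1) (hg0 : g (r • e) = 0)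
    {ρ σ : ℝ} (hρ0 : 0 ≤ ρ) (hρr : ρ < r) (hσ : σ = omegaN N * ρ ^ N) :
    rearr (Metric.ball 0 r) g σ = g (ρ • e) := by
  have hσ0 : 0 ≤ σ := hσ ▸ mul_nonneg (omegaN_pos hN).le (pow_nonneg hρ0 _)
  have hgnn : ∀ x : Euc N, ‖x‖ ≤ r → 0 ≤ g x := by
    intro x hx
    have := hmono x (r • e) (by rw [norm_smul_unit he hr.le]; exact hx)
    rwa [hg0] at this
  have key : {t : ℝ | 0 ≤ t ∧ ENNReal.ofReal σ < volume {x | x ∈ Metric.ball (0:Euc N) r ∧ t < |g x|}}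
      = Ico 0 (g (ρ • e)) := by
    ext t
    simp only [mem_setOf_eq, mem_Ico]
    constructor
    · rintro ⟨ht0, hvol⟩
      refine ⟨ht0, ?_⟩
      by_contra h
      push_neg at h
      -- superlevel set ⊆ ball 0 ρ
      have hsub : {x | x ∈ Metric.ball (0:Euc N) r ∧ t < |g x|} ⊆ Metric.ball (0:Euc N) ρ := by
        rintro x ⟨hxr, hxt⟩
        rw [mem_ball_zero_iff] at hxr ⊢
        rw [abs_of_nonneg (hgnn x hxr.le)] at hxt
        by_contra hge
        push_neg at hge
        have := hmono (ρ • e) x (by rw [norm_smul_unit he hρ0]; exact hge)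
        exact absurd (lt_of_lt_of_le hxt (this.trans h)) (lt_irrefl t)
      have := (measure_mono hsub).trans_eq (volume_ball_eq hN hρ0)
      rw [← hσ] at this
      exact absurd (hvol.trans_le this) (by simp)
    · rintro ⟨ht0, htlt⟩
      refine ⟨ht0, ?_⟩
      -- find ρ' ∈ (ρ, r) with g (ρ' • e) > t
      have hcongE : ContinuousAt (fun c : ℝ => g (c • e)) ρ := by
        have h1 : ContinuousAt g (ρ • e) :=
          hgcont.continuousAt (Metric.isOpen_ball.mem_nhds
            (by rw [mem_ball_zero_iff, norm_smul_unit he hρ0]; exact hρr))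
        have h2 : Continuous (fun c : ℝ => c • e) := by continuity
        exact ContinuousAt.comp (x := ρ) h1 h2.continuousAt
      have : ∀ᶠ c in nhds ρ, t < g (c • e) :=
        hcongE.eventually_const_lt (by simpa using htlt)
      obtain ⟨δ, hδ, hδp⟩ := Metric.eventually_nhds_iff.1 this
      set ρ' : ℝ := min (ρ + δ / 2) ((ρ + r) / 2) with hρ'def
      have hρ'1 : ρ < ρ' := lt_min (by linarith) (by linarith)
      have hρ'2 : ρ' < r := min_le_right _ _ |>.trans_lt (by linarith)
      have hgρ' : t < g (ρ' • e) := by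
        apply hδp
        rw [Real.dist_eq, abs_of_pos (by linarith)]
        calc ρ' - ρ ≤ (ρ + δ/2) - ρ := by
              have := min_le_left (ρ + δ / 2) ((ρ + r) / 2); linarith
          _ < δ := by linarith
      have hsub : Metric.closedBall (0:Euc N) ρ' ⊆
          {x | x ∈ Metric.ball (0:Euc N) r ∧ t < |g x|} := by
        intro y hy
        rw [Metric.mem_closedBall, dist_zero_right] at hy
        refine ⟨by rw [mem_ball_zero_iff]; linarith, ?_⟩
        have := hmono y (ρ' • e) (by rw [norm_smul_unit he (by linarith)]; exact hy)
        exact lt_of_lt_of_le (lt_of_lt_of_le hgρ' this) (le_abs_self _)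
      refine lt_of_lt_of_le ?_ (measure_mono hsub)
      rw [volume_closedBall_eq hN (by linarith), hσ]
      rw [ENNReal.ofReal_lt_ofReal_iff]
      · have : ρ ^ N < ρ' ^ N := pow_lt_pow_left₀ hρ'1 hρ0 hN.ne'
        nlinarith [omegaN_pos hN]
      · nlinarith [omegaN_pos hN, pow_pos (lt_of_le_of_lt hρ0 hρ'1) N]
  rw [rearr, key]
  rcases eq_or_lt_of_le (hgnn (ρ • e) (by rw [norm_smul_unit he hρ0]; exact hρr.le)) with h | h
  · rw [← h, Ico_self, Real.sSup_empty]
  · exact csSup_Ico h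


section Aux2
variable {N : ℕ}

variable {N : ℕ}

lemma rearr_nonneg (E : Set (Euc N)) (f : Euc N → ℝ) (σ : ℝ) : 0 ≤ rearr E f σ := by
  set S := {t : ℝ | 0 ≤ t ∧ ENNReal.ofReal σ < volume {x | x ∈ E ∧ t < |f x|}} with hS
  rcases eq_empty_or_nonempty S with h | h
  · rw [rearr, ← hS, h, Real.sSup_empty]
  · by_cases hb : BddAbove S
    · obtain ⟨t, ht⟩ := h
      have h0 : (0:ℝ) ∈ S := by
        refine ⟨le_refl 0, lt_of_lt_of_le ht.2 (measure_mono ?_)⟩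
        exact fun x hx => ⟨hx.1, lt_of_le_of_lt ht.1 hx.2⟩
      exact le_csSup hb h0
    · rw [rearr, ← hS, Real.sSup_of_not_bddAbove hb]

lemma rearr_measurable (E : Set (Euc N)) (f : Euc N → ℝ) :
    Measurable (fun σ => rearr E f σ) := by
  set m : ℝ → ENNReal := fun t => volume {x | x ∈ E ∧ t < |f x|} with hm
  have hmanti : Antitone m := by
    intro t t' htt'
    exact measure_mono (fun x hx => ⟨hx.1, lt_of_le_of_lt htt' hx.2⟩)
  set S : ℝ → Set ℝ := fun σ => {t : ℝ | 0 ≤ t ∧ ENNReal.ofReal σ < m t} with hSdef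
  have hrearr : ∀ σ, rearr E f σ = sSup (S σ) := fun σ => rfl
  have hdown : ∀ σ t t', t' ∈ S σ → 0 ≤ t → t ≤ t' → t ∈ S σ := by
    intro σ t t' ht' ht0 htt'
    exact ⟨ht0, lt_of_lt_of_le ht'.2 (hmanti htt')⟩
  apply measurable_of_Ioi
  intro c
  rcases lt_or_ge c 0 with hc | hc
  · have : (fun σ => rearr E f σ) ⁻¹' Ioi c = univ := by
      ext σ; simp only [mem_preimage, mem_Ioi, mem_univ, iff_true]
      exact lt_of_lt_of_le hc (rearr_nonneg E f σ)
    rw [this]; exact MeasurableSet.univ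
  · have key : (fun σ => rearr E f σ) ⁻¹' Ioi c =
        (⋃ n : ℕ, {σ : ℝ | m n ≤ ENNReal.ofReal σ}) ∩
        {σ : ℝ | ENNReal.ofReal σ < ⨆ t : {t : ℝ // c < t ∧ 0 ≤ t}, m t} := by
      ext σ
      simp only [mem_preimage, mem_Ioi, mem_inter_iff, mem_iUnion, mem_setOf_eq, lt_iSup_iff]
      constructor
      · intro hcσ
        have hne : (S σ).Nonempty := by
          by_contra h
          rw [not_nonempty_iff_eq_empty] at h
          rw [hrearr, h, Real.sSup_empty] at hcσ; exact absurd hcσ (not_lt.2 hc)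
        have hbdd : BddAbove (S σ) := by
          by_contra h
          rw [hrearr, Real.sSup_of_not_bddAbove h] at hcσ; exact absurd hcσ (not_lt.2 hc)
        obtain ⟨t, htS, hct⟩ := exists_lt_of_lt_csSup hne (by rwa [← hrearr])
        obtain ⟨M, hM⟩ := hbdd
        obtain ⟨n, hn⟩ := exists_nat_ge (max M 0 + 1)
        constructor
        · refine ⟨n, ?_⟩
          by_contra h
          push_neg at h
          have : (n:ℝ) ∈ S σ := ⟨by positivity, h⟩
          have := hM this
          have := le_max_left M (0:ℝ)
          linarith
        · exact ⟨⟨t, hct, le_trans hc hct.le⟩, htS.2⟩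
      · rintro ⟨⟨n, hn⟩, ⟨⟨t, hct, ht0⟩, hσt⟩⟩
        have htS : t ∈ S σ := ⟨ht0, hσt⟩
        have hbdd : BddAbove (S σ) := by
          refine ⟨n, fun t' ht' => ?_⟩
          by_contra h
          push_neg at h
          have : (n:ℝ) ∈ S σ := hdown σ n t' ht' (by positivity) h.le
          exact absurd hn (not_le.2 this.2)
        calc c < t := hct
          _ ≤ sSup (S σ) := le_csSup hbdd htS
    rw [key]
    refine MeasurableSet.inter ?_ ?_
    · exact MeasurableSet.iUnion fun n =>
        measurableSet_le measurable_const ENNReal.measurable_ofReal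
    · exact ENNReal.measurable_ofReal measurableSet_Iio
end Aux2


lemma rpow_pow_eq {x : ℝ} (hx : 0 ≤ x) (c : ℝ) (n : ℕ) :
    (x ^ c) ^ n = x ^ (c * n) := by
  rw [← Real.rpow_natCast (x ^ c) n, ← Real.rpow_mul hx]

lemma omega_rho_pow {N : ℕ} (hN : 0 < N) {ω σ : ℝ} (hω : 0 < ω) (hσ : 0 ≤ σ) :
    ω * ((σ / ω) ^ ((N:ℝ)⁻¹)) ^ N = σ := by
  rw [Real.rpow_inv_natCast_pow (div_nonneg hσ hω.le) hN.ne', mul_comm,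
    div_mul_cancel₀ σ hω.ne']

lemma key_identity {N : ℕ} (hN : 0 < N) {ω σ : ℝ} (hω : 0 < ω) (hσ : 0 < σ) :
    (N:ℝ) * ω * ((N:ℝ)⁻¹ * (σ/ω) ^ ((N:ℝ)⁻¹ - 1) * ω⁻¹) * ((σ/ω) ^ ((N:ℝ)⁻¹)) ^ (N - 1) = 1 := by
  have hx : 0 < σ / ω := div_pos hσ hω
  have hNR : ((N:ℝ)) ≠ 0 := Nat.cast_ne_zero.2 hN.ne'
  have h1 : ((σ/ω) ^ ((N:ℝ)⁻¹)) ^ (N-1) = (σ/ω) ^ ((N:ℝ)⁻¹ * ((N:ℝ) - 1)) := by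
    rw [rpow_pow_eq hx.le]
    congr 1
    rw [Nat.cast_sub hN, Nat.cast_one]
  have h2 : (σ/ω) ^ ((N:ℝ)⁻¹ - 1) * (σ/ω) ^ ((N:ℝ)⁻¹ * ((N:ℝ) - 1)) = 1 := by
    rw [← Real.rpow_add hx, show ((N:ℝ)⁻¹ - 1 + (N:ℝ)⁻¹ * ((N:ℝ) - 1)) = 0 by
      field_simp; ring, Real.rpow_zero]
  calc (N:ℝ) * ω * ((N:ℝ)⁻¹ * (σ/ω) ^ ((N:ℝ)⁻¹ - 1) * ω⁻¹) * ((σ/ω) ^ ((N:ℝ)⁻¹)) ^ (N - 1)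
      = ((N:ℝ) * (N:ℝ)⁻¹) * (ω * ω⁻¹) *
        ((σ/ω) ^ ((N:ℝ)⁻¹ - 1) * (σ/ω) ^ ((N:ℝ)⁻¹ * ((N:ℝ) - 1))) := by rw [h1]; ring
    _ = 1 := by rw [h2, mul_inv_cancel₀ hNR, mul_inv_cancel₀ hω.ne']; norm_num

lemma key_identity2 {N : ℕ} (hN : 0 < N) {ω σ : ℝ} (hω : 0 < ω) (hσ : 0 < σ) :
    (N:ℝ)^2 * ω^(2/(N:ℝ)) * σ^(2-2/(N:ℝ)) * ((N:ℝ)⁻¹ * (σ/ω)^((N:ℝ)⁻¹ - 1) * ω⁻¹)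
      = (N:ℝ) * ω * ((σ/ω) ^ ((N:ℝ)⁻¹)) ^ (N-1) := by
  have hx : 0 < σ / ω := div_pos hσ hω
  have hNR : ((N:ℝ)) ≠ 0 := Nat.cast_ne_zero.2 hN.ne'
  set E1 : ℝ := σ ^ ((N:ℝ)⁻¹) with hE1def
  set E2 : ℝ := ω ^ ((N:ℝ)⁻¹) with hE2def
  have hE1 : 0 < E1 := Real.rpow_pos_of_pos hσ _
  have hE2 : 0 < E2 := Real.rpow_pos_of_pos hω _
  have hE1N : E1 ^ (N-1) * E1 = σ := by
    rw [← pow_succ, Nat.sub_add_cancel hN, hE1def, Real.rpow_inv_natCast_pow hσ.le hN.ne']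
  have hE2N : E2 ^ (N-1) * E2 = ω := by
    rw [← pow_succ, Nat.sub_add_cancel hN, hE2def, Real.rpow_inv_natCast_pow hω.le hN.ne']
  have hd1 : (σ/ω) ^ ((N:ℝ)⁻¹) = E1 / E2 := Real.div_rpow hσ.le hω.le _
  have hd2 : (σ/ω) ^ ((N:ℝ)⁻¹ - 1) = (E1/E2) * (ω/σ) := by
    rw [Real.rpow_sub hx, Real.rpow_one, hd1]
    field_simp
  have hs2 : σ ^ ((2:ℝ) - 2/(N:ℝ)) = σ^2 / E1^2 := by
    rw [eq_div_iff (by positivity), hE1def, rpow_pow_eq hσ.le, ← Real.rpow_add hσ,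
      show (2:ℝ) - 2/(N:ℝ) + (N:ℝ)⁻¹ * ((2:ℕ):ℝ) = ((2:ℕ):ℝ) by push_cast; field_simp; ring,
      Real.rpow_natCast]
  have hw2 : ω ^ ((2:ℝ)/(N:ℝ)) = E2^2 := by
    rw [hE2def, rpow_pow_eq hω.le,
      show (N:ℝ)⁻¹ * ((2:ℕ):ℝ) = 2/(N:ℝ) by push_cast; ring]
  rw [hd1, hd2, hs2, hw2, div_pow]
  rw [← hE1N, ← hE2N]
  have h1 : E1 ^ (N-1) ≠ 0 := by positivity
  have h2 : E2 ^ (N-1) ≠ 0 := by positivity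
  field_simp

namespace RCE
variable {N : ℕ}

def ut (v : Euc N → ℝ → ℝ) (e : Euc N) : ℝ × ℝ → ℝ := fun p => v (p.1 • e) p.2
def P1 (v : Euc N → ℝ → ℝ) (e : Euc N) : ℝ × ℝ → (ℝ × ℝ →L[ℝ] ℝ) := fderiv ℝ (ut v e)
def pr (v : Euc N → ℝ → ℝ) (e : Euc N) : ℝ × ℝ → ℝ := fun p => P1 v e p (1, 0)
def pz (v : Euc N → ℝ → ℝ) (e : Euc N) : ℝ × ℝ → ℝ := fun p => P1 v e p (0, 1)
def prr (v : Euc N → ℝ → ℝ) (e : Euc N) : ℝ × ℝ → ℝ := fun p => fderiv ℝ (pr v e) p (1, 0)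
def pzz (v : Euc N → ℝ → ℝ) (e : Euc N) : ℝ × ℝ → ℝ := fun p => fderiv ℝ (pz v e) p (0, 1)
def U (r : ℝ) : Set (ℝ × ℝ) := Ioo (-r) r ×ˢ Ioi 0

lemma isOpen_U {r : ℝ} : IsOpen (U r) := isOpen_Ioo.prod isOpen_Ioi

variable {r : ℝ} {v : Euc N → ℝ → ℝ} {e : Euc N}

lemma deriv_congr_of_eqOn {f g : ℝ → ℝ} {S : Set ℝ} (hS : IsOpen S) (h : EqOn f g S)
    {x : ℝ} (hx : x ∈ S) : deriv f x = deriv g x :=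
  Filter.EventuallyEq.deriv_eq (h.eventuallyEq_of_mem (hS.mem_nhds hx))

section basic
variable (he : ‖e‖ = 1)
    (hC2 : ContDiffOn ℝ 2 (fun p : Euc N × ℝ => v p.1 p.2) (Metric.ball 0 r ×ˢ Ioi (0:ℝ)))
include he hC2

lemma utC2 : ContDiffOn ℝ 2 (ut v e) (U r) := by
  have hL : ContDiff ℝ 2 (fun p : ℝ × ℝ => ((p.1 • e, p.2) : Euc N × ℝ)) :=
    ContDiff.prodMk (contDiff_fst.smul contDiff_const) contDiff_snd
  refine hC2.comp hL.contDiffOn ?_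
  rintro ⟨a, b⟩ ⟨ha, hb⟩
  refine ⟨?_, hb⟩
  rw [mem_ball_zero_iff, norm_smul, he, mul_one, Real.norm_eq_abs, abs_lt]
  exact ⟨ha.1, ha.2⟩

lemma P1C1 : ContDiffOn ℝ 1 (P1 v e) (U r) :=
  (utC2 he hC2).fderiv_of_isOpen isOpen_U (by norm_num)

lemma prC1 : ContDiffOn ℝ 1 (pr v e) (U r) :=
  (ContinuousLinearMap.apply ℝ ℝ ((1:ℝ),(0:ℝ))).contDiff.comp_contDiffOn (P1C1 he hC2)

lemma pzC1 : ContDiffOn ℝ 1 (pz v e) (U r) :=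
  (ContinuousLinearMap.apply ℝ ℝ ((0:ℝ),(1:ℝ))).contDiff.comp_contDiffOn (P1C1 he hC2)

lemma continuousOn_pr : ContinuousOn (pr v e) (U r) := (prC1 he hC2).continuousOn
lemma continuousOn_pz : ContinuousOn (pz v e) (U r) := (pzC1 he hC2).continuousOn

lemma continuousOn_prr : ContinuousOn (prr v e) (U r) := by
  have h := (prC1 he hC2).continuousOn_fderiv_of_isOpen isOpen_U le_rfl
  exact (ContinuousLinearMap.apply ℝ ℝ ((1:ℝ),(0:ℝ))).continuous.comp_continuousOn h

lemma continuousOn_pzz : ContinuousOn (pzz v e) (U r) := by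
  have h := (pzC1 he hC2).continuousOn_fderiv_of_isOpen isOpen_U le_rfl
  exact (ContinuousLinearMap.apply ℝ ℝ ((0:ℝ),(1:ℝ))).continuous.comp_continuousOn h

lemma ut_diffAt {p : ℝ × ℝ} (hp : p ∈ U r) : DifferentiableAt ℝ (ut v e) p :=
  (((utC2 he hC2).contDiffAt (isOpen_U.mem_nhds hp)).differentiableAt (by norm_num))

lemma hasDerivAt_z {a b : ℝ} (hp : (a, b) ∈ U r) :
    HasDerivAt (fun t => ut v e (a, t)) (pz v e (a, b)) b := by
  have h1 := (ut_diffAt he hC2 hp).hasFDerivAt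
  have h2 : HasDerivAt (fun t : ℝ => ((a, t) : ℝ × ℝ)) ((0:ℝ), (1:ℝ)) b :=
    (hasDerivAt_const b a).prodMk (hasDerivAt_id b)
  exact h1.comp_hasDerivAt b h2

lemma hasDerivAt_r {a b : ℝ} (hp : (a, b) ∈ U r) :
    HasDerivAt (fun t => ut v e (t, b)) (pr v e (a, b)) a := by
  have h1 := (ut_diffAt he hC2 hp).hasFDerivAt
  have h2 : HasDerivAt (fun t : ℝ => ((t, b) : ℝ × ℝ)) ((1:ℝ), (0:ℝ)) a :=
    (hasDerivAt_id a).prodMk (hasDerivAt_const a b)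
  exact h1.comp_hasDerivAt a h2

lemma pz_diffAt {p : ℝ × ℝ} (hp : p ∈ U r) : DifferentiableAt ℝ (pz v e) p :=
  ((pzC1 he hC2).contDiffAt (isOpen_U.mem_nhds hp)).differentiableAt one_ne_zero

lemma pr_diffAt {p : ℝ × ℝ} (hp : p ∈ U r) : DifferentiableAt ℝ (pr v e) p :=
  ((prC1 he hC2).contDiffAt (isOpen_U.mem_nhds hp)).differentiableAt one_ne_zero

lemma hasDerivAt_zz {a b : ℝ} (hp : (a, b) ∈ U r) :
    HasDerivAt (fun t => pz v e (a, t)) (pzz v e (a, b)) b := by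
  have h1 := (pz_diffAt he hC2 hp).hasFDerivAt
  have h2 : HasDerivAt (fun t : ℝ => ((a, t) : ℝ × ℝ)) ((0:ℝ), (1:ℝ)) b :=
    (hasDerivAt_const b a).prodMk (hasDerivAt_id b)
  exact h1.comp_hasDerivAt b h2

lemma hasDerivAt_rr {a b : ℝ} (hp : (a, b) ∈ U r) :
    HasDerivAt (fun t => pr v e (t, b)) (prr v e (a, b)) a := by
  have h1 := (pr_diffAt he hC2 hp).hasFDerivAt
  have h2 : HasDerivAt (fun t : ℝ => ((t, b) : ℝ × ℝ)) ((1:ℝ), (0:ℝ)) a :=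
    (hasDerivAt_id a).prodMk (hasDerivAt_const a b)
  exact h1.comp_hasDerivAt a h2

/-- first z-derivative of `v (a • e)` -/
lemma deriv_v_eq_pz {a b : ℝ} (hp : (a, b) ∈ U r) :
    deriv (v (a • e)) b = pz v e (a, b) :=
  (hasDerivAt_z he hC2 hp).deriv

/-- second z-derivative of `v (a • e)` -/
lemma deriv_deriv_v_eq_pzz {a b : ℝ} (hp : (a, b) ∈ U r) :
    deriv (deriv (v (a • e))) b = pzz v e (a, b) := by
  have ha : a ∈ Ioo (-r) r := hp.1
  have heq : EqOn (deriv (v (a • e))) (fun t => pz v e (a, t)) (Ioi 0) := by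
    intro t ht
    exact deriv_v_eq_pz he hC2 ⟨ha, ht⟩
  rw [deriv_congr_of_eqOn isOpen_Ioi heq hp.2]
  exact (hasDerivAt_zz he hC2 hp).deriv

end basic

section lap
variable {i0 : Fin N}
  (hN : 0 < N)
  (hC2 : ContDiffOn ℝ 2 (fun p : Euc N × ℝ => v p.1 p.2) (Metric.ball 0 r ×ˢ Ioi (0:ℝ)))
  (hrad : RadialDecr v)

lemma norm_single_one (i : Fin N) : ‖(EuclideanSpace.single i (1:ℝ) : Euc N)‖ = 1 := by
  rw [EuclideanSpace.norm_single, norm_one]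

/-- radial identity -/
lemma radial_eq (hrad : RadialDecr v) {e : Euc N} (he : ‖e‖ = 1) {z : ℝ} (hz : 0 ≤ z)
    (y : Euc N) : v y z = ut v e (‖y‖, z) := by
  have hn : ‖(‖y‖ • e)‖ = ‖y‖ := by
    rw [norm_smul, he, mul_one, Real.norm_eq_abs, abs_of_nonneg (norm_nonneg y)]
  show v y z = v (‖y‖ • e) z
  exact le_antisymm (hrad z hz _ y hn.le) (hrad z hz y _ hn.ge)

lemma norm_mix {i j : Fin N} (hij : j ≠ i) (ρ t : ℝ) :
    ‖(ρ • EuclideanSpace.single i (1:ℝ) + t • EuclideanSpace.single j (1:ℝ) : Euc N)‖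
      = Real.sqrt (ρ ^ 2 + t ^ 2) := by
  have horth : (inner ℝ (ρ • EuclideanSpace.single i (1:ℝ) : Euc N)
      (t • EuclideanSpace.single j (1:ℝ)) : ℝ) = 0 := by
    have hsj : (EuclideanSpace.single j (1:ℝ) : Euc N) i = 0 := by
      rw [EuclideanSpace.single_apply]
      exact if_neg (fun h => hij h.symm)
    rw [real_inner_smul_left, real_inner_smul_right, EuclideanSpace.inner_single_left, hsj]
    simp
  have hsq : ‖(ρ • EuclideanSpace.single i (1:ℝ) + t • EuclideanSpace.single j (1:ℝ) : Euc N)‖ ^ 2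
      = ρ ^ 2 + t ^ 2 := by
    rw [norm_add_sq_real, horth]
    rw [norm_smul, norm_smul, norm_single_one, norm_single_one]
    simp [mul_pow, sq_abs]
  rw [← hsq, Real.sqrt_sq (norm_nonneg _)]

set_option maxHeartbeats 1000000 in
include hC2 hrad hN in
lemma lapx_radial (he : ‖(EuclideanSpace.single i0 (1:ℝ) : Euc N)‖ = 1)
    {ρ z : ℝ} (hρ : 0 < ρ) (hρr : ρ < r) (hz : 0 < z) :
    lapx v (ρ • EuclideanSpace.single i0 (1:ℝ)) z =
      prr v (EuclideanSpace.single i0 (1:ℝ)) (ρ, z) +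
      ((N : ℝ) - 1) * (pr v (EuclideanSpace.single i0 (1:ℝ)) (ρ, z) / ρ) := by
  set e : Euc N := EuclideanSpace.single i0 (1:ℝ) with he_def
  have hmem : (ρ, z) ∈ U r := ⟨⟨by linarith, hρr⟩, hz⟩
  -- term for i = i0
  have hterm0 : deriv (deriv fun t : ℝ => v (ρ • e + t • EuclideanSpace.single i0 (1:ℝ)) z) 0
      = prr v e (ρ, z) := by
    have hfun : (fun t : ℝ => v (ρ • e + t • EuclideanSpace.single i0 (1:ℝ)) z)
        = fun t : ℝ => ut v e (ρ + t, z) := by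
      funext t
      rw [← he_def, ← add_smul]
      rfl
    rw [hfun]
    have h1 : (deriv fun t : ℝ => ut v e (ρ + t, z)) = fun t => deriv (fun c => ut v e (c, z)) (ρ + t) := by
      funext t
      exact deriv_comp_const_add (fun c => ut v e (c, z)) ρ t
    rw [h1, deriv_comp_const_add (deriv (fun c => ut v e (c, z))) ρ 0, add_zero]
    have heq : EqOn (deriv (fun c => ut v e (c, z))) (fun c => pr v e (c, z)) (Ioo (-r) r) := by
      intro c hc
      exact (hasDerivAt_r he hC2 ⟨hc, hz⟩).deriv
    rw [deriv_congr_of_eqOn isOpen_Ioo heq hmem.1]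
    exact (hasDerivAt_rr he hC2 hmem).deriv
  -- terms for i ≠ i0
  have hterm : ∀ i : Fin N, i ≠ i0 →
      deriv (deriv fun t : ℝ => v (ρ • e + t • EuclideanSpace.single i (1 : ℝ)) z) 0
        = pr v e (ρ, z) / ρ := by
    intro i hi
    set φ : ℝ → ℝ := fun t => Real.sqrt (ρ ^ 2 + t ^ 2) with hφdef
    have hsum_pos : ∀ t : ℝ, 0 < ρ ^ 2 + t ^ 2 := fun t => by positivity
    have hφpos : ∀ t, 0 < φ t := fun t => Real.sqrt_pos.2 (hsum_pos t)
    have hφ0 : φ 0 = ρ := by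
      rw [hφdef]
      simp only []
      rw [show ρ ^ 2 + (0:ℝ) ^ 2 = ρ ^ 2 by ring, Real.sqrt_sq hρ.le]
    have hfun : (fun t : ℝ => v (ρ • e + t • EuclideanSpace.single i (1:ℝ)) z)
        = fun t : ℝ => ut v e (φ t, z) := by
      funext t
      rw [radial_eq hrad he hz.le (ρ • e + t • EuclideanSpace.single i (1:ℝ))]
      rw [he_def, norm_mix hi ρ t]
    rw [hfun]
    have hφD : ∀ t, HasDerivAt φ (2 * t / (2 * φ t)) t := by
      intro t
      have h1 : HasDerivAt (fun t : ℝ => ρ ^ 2 + t ^ 2) (2 * t) t := by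
        simpa using (hasDerivAt_pow 2 t).const_add (ρ ^ 2)
      exact h1.sqrt (hsum_pos t).ne'
    have hφcont : Continuous φ := by
      apply Real.continuous_sqrt.comp
      continuity
    have hev : ∀ᶠ t in nhds (0:ℝ), φ t < r :=
      hφcont.continuousAt.eventually_lt_const (by rw [hφ0]; exact hρr)
    have hWD : ∀ t : ℝ, φ t < r → HasDerivAt (fun s : ℝ => ut v e (φ s, z))
        (pr v e (φ t, z) * (2 * t / (2 * φ t))) t := by
      intro t ht
      have h1 : HasDerivAt (fun c => ut v e (c, z)) (pr v e (φ t, z)) (φ t) :=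
        hasDerivAt_r he hC2 ⟨⟨by linarith [hφpos t], ht⟩, hz⟩
      exact h1.comp t (hφD t)
    have hderiv1 : deriv (fun s : ℝ => ut v e (φ s, z))
        =ᶠ[nhds (0:ℝ)] fun t => pr v e (φ t, z) * (2 * t / (2 * φ t)) :=
      hev.mono fun t ht => (hWD t ht).deriv
    rw [hderiv1.deriv_eq]
    have h2 : HasDerivAt (fun c => pr v e (c, z)) (prr v e (ρ, z)) ρ :=
      hasDerivAt_rr he hC2 hmem
    have h2' : HasDerivAt (fun c => pr v e (c, z)) (prr v e (ρ, z)) (φ 0) := by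
      rw [hφ0]; exact h2
    have hA : HasDerivAt (fun t => pr v e (φ t, z))
        (prr v e (ρ, z) * (2 * 0 / (2 * φ 0))) 0 := h2'.comp 0 (hφD 0)
    have hBnum : HasDerivAt (fun t : ℝ => 2 * t) 2 (0:ℝ) := by
      simpa using (hasDerivAt_id (0:ℝ)).const_mul (2:ℝ)
    have hBden : HasDerivAt (fun t : ℝ => 2 * φ t) (2 * (2 * 0 / (2 * φ 0))) (0:ℝ) :=
      (hφD 0).const_mul 2
    have hB : HasDerivAt (fun t : ℝ => 2 * t / (2 * φ t))
        ((2 * (2 * φ 0) - 2 * 0 * (2 * (2 * 0 / (2 * φ 0)))) / (2 * φ 0) ^ 2) 0 :=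
      hBnum.div hBden (by nlinarith [hφpos 0])
    have hAB : deriv (fun t => pr v e (φ t, z) * (2 * t / (2 * φ t))) 0 = _ := (hA.mul hB).deriv
    rw [hAB, hφ0]
    field_simp
    ring
  -- assemble the sum
  rw [lapx, ← Finset.sum_compl_add_sum ({i0} : Finset (Fin N))]
  have hs1 : ∑ i ∈ ({i0} : Finset (Fin N)), (deriv (deriv fun t : ℝ =>
      v (ρ • e + t • EuclideanSpace.single i (1:ℝ)) z) 0) = prr v e (ρ, z) := by
    rw [Finset.sum_singleton]
    exact hterm0
  have hs2 : ∑ i ∈ ({i0} : Finset (Fin N))ᶜ, (deriv (deriv fun t : ℝ =>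
      v (ρ • e + t • EuclideanSpace.single i (1:ℝ)) z) 0)
      = ((N : ℝ) - 1) * (pr v e (ρ, z) / ρ) := by
    rw [Finset.sum_congr rfl (fun i hi => hterm i (by
      simpa [Finset.mem_compl, Finset.mem_singleton] using hi))]
    rw [Finset.sum_const, Finset.card_compl, Finset.card_singleton, Fintype.card_fin,
      nsmul_eq_mul, Nat.cast_sub hN, Nat.cast_one]
  rw [hs1, hs2]
  ring
end lap
end RCE
-- appended: derivs_z development
namespace RCE
variable {N : ℕ} {r : ℝ} {v : Euc N → ℝ → ℝ} {e : Euc N}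

set_option maxHeartbeats 1000000 in
lemma derivs_z
    (hC2 : ContDiffOn ℝ 2 (fun p : Euc N × ℝ => v p.1 p.2) (Metric.ball 0 r ×ˢ Ioi (0:ℝ)))
    (hrad : RadialDecr v)
    (hN : 0 < N) (hr : 0 < r) (he : ‖e‖ = 1)
    (hzero : ∀ z : ℝ, 0 ≤ z → v (r • e) z = 0)
    {s : ℝ} (h0s : 0 < s) (hsT : s < omegaN N * r ^ N) :
    ∀ z : ℝ, 0 < z →
      (deriv (fun z' : ℝ => ∫ σ in (0:ℝ)..s, rearr (Metric.ball 0 r) (fun x => v x z') σ) z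
        = ∫ σ in (0:ℝ)..s, pz v e ((σ / omegaN N) ^ ((N:ℝ)⁻¹), z)) ∧
      (deriv (deriv (fun z' : ℝ => ∫ σ in (0:ℝ)..s,
          rearr (Metric.ball 0 r) (fun x => v x z') σ)) z
        = ∫ σ in (0:ℝ)..s, pzz v e ((σ / omegaN N) ^ ((N:ℝ)⁻¹), z)) := by
  have hω : 0 < omegaN N := omegaN_pos hN
  set ω := omegaN N with hωdef
  set ρf : ℝ → ℝ := fun σ => (σ/ω) ^ ((N:ℝ)⁻¹) with hρf
  have hρf0 : ∀ σ : ℝ, 0 ≤ σ → 0 ≤ ρf σ := fun σ hσ => Real.rpow_nonneg (by positivity) _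
  have hρmono : ∀ σ τ : ℝ, 0 ≤ σ → σ ≤ τ → ρf σ ≤ ρf τ := fun σ τ h1 h2 =>
    Real.rpow_le_rpow (by positivity) (by gcongr) (by positivity)
  have hρs_lt : ρf s < r := by
    have h1 : ρf s < ((ω * r^N)/ω) ^ ((N:ℝ)⁻¹) :=
      Real.rpow_lt_rpow (by positivity) ((div_lt_div_iff_of_pos_right hω).2 hsT) (by positivity)
    calc ρf s < ((ω * r^N)/ω) ^ ((N:ℝ)⁻¹) := h1
      _ = r := by
        rw [mul_comm ω (r^N), mul_div_assoc, div_self hω.ne', mul_one, ← Real.rpow_natCast r N,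
          ← Real.rpow_mul hr.le, mul_inv_cancel₀ (Nat.cast_ne_zero.2 hN.ne'), Real.rpow_one]
  have hIoo : ∀ σ ∈ Icc (0:ℝ) s, ∀ z' : ℝ, 0 < z' → (ρf σ, z') ∈ U r := by
    intro σ hσ z' hz'
    exact ⟨⟨lt_of_lt_of_le (by linarith) (hρf0 σ hσ.1),
      lt_of_le_of_lt (hρmono σ s hσ.1 hσ.2) hρs_lt⟩, hz'⟩
  have hρf_cont : Continuous ρf := by
    apply continuous_iff_continuousAt.2
    intro σ
    have h1 : ContinuousAt (fun x : ℝ => x ^ ((N:ℝ)⁻¹)) (σ/ω) :=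
      Real.continuousAt_rpow_const _ _ (Or.inr (by positivity))
    exact ContinuousAt.comp (f := fun σ => σ/ω) (x := σ) h1 (by fun_prop)
  have hrearr : ∀ z' : ℝ, 0 < z' → ∀ σ ∈ Icc (0:ℝ) s,
      rearr (Metric.ball 0 r) (fun x => v x z') σ = ut v e (ρf σ, z') := by
    intro z' hz' σ hσ
    have hcont : ContinuousOn (fun x : Euc N => v x z') (Metric.ball 0 r) := by
      have hmap : Continuous (fun x : Euc N => ((x, z') : Euc N × ℝ)) := by fun_prop
      exact hC2.continuousOn.comp hmap.continuousOn (fun x hx => ⟨hx, hz'⟩)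
    exact rearr_radial hN hr (fun x x' h => hrad z' hz'.le x x' h) hcont he
      (hzero z' hz'.le) (hρf0 σ hσ.1) (lt_of_le_of_lt (hρmono σ s hσ.1 hσ.2) hρs_lt)
      (omega_rho_pow hN hω hσ.1).symm
  have hGeq : EqOn (fun z' : ℝ => ∫ σ in (0:ℝ)..s, rearr (Metric.ball 0 r) (fun x => v x z') σ)
      (fun z' : ℝ => ∫ σ in (0:ℝ)..s, ut v e (ρf σ, z')) (Ioi 0) := by
    intro z' hz'
    refine intervalIntegral.integral_congr ?_
    intro σ hσ
    rw [uIcc_of_le h0s.le] at hσ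
    exact hrearr z' hz' σ hσ
  have hcomp_cont : ∀ (g : ℝ × ℝ → ℝ), ContinuousOn g (U r) →
      ∀ z' : ℝ, 0 < z' → ContinuousOn (fun σ => g (ρf σ, z')) (Icc 0 s) := by
    intro g hg z' hz'
    refine hg.comp ((hρf_cont.prodMk continuous_const).continuousOn) ?_
    intro σ hσ
    exact hIoo σ hσ z' hz'
  -- generic dominated-differentiation step
  have hdom : ∀ (F F' : ℝ × ℝ → ℝ), ContinuousOn F (U r) → ContinuousOn F' (U r) →
      (∀ a b : ℝ, (a,b) ∈ U r → HasDerivAt (fun t => F (a, t)) (F' (a, b)) b) →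
      ∀ z' : ℝ, 0 < z' → HasDerivAt (fun z'' => ∫ σ in (0:ℝ)..s, F (ρf σ, z''))
        (∫ σ in (0:ℝ)..s, F' (ρf σ, z')) z' := by
    intro F F' hFc hF'c hFD z' hz'
    have hKsub : (Icc (0:ℝ) (ρf s) ×ˢ Icc (z'/2) (2*z')) ⊆ U r := by
      rintro ⟨a,b⟩ ⟨ha, hb⟩
      refine ⟨⟨lt_of_lt_of_le (by linarith) ha.1, lt_of_le_of_lt ha.2 hρs_lt⟩,
        lt_of_lt_of_le (by positivity) hb.1⟩
    obtain ⟨C, hC⟩ : ∃ C, ∀ p ∈ Icc (0:ℝ) (ρf s) ×ˢ Icc (z'/2) (2*z'), ‖F' p‖ ≤ C :=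
      (isCompact_Icc.prod isCompact_Icc).exists_bound_of_continuousOn (hF'c.mono hKsub)
    have hball : ∀ z'' ∈ Metric.ball z' (z'/2), z'' ∈ Icc (z'/2) (2*z') := by
      intro z'' hz''
      rw [Metric.mem_ball, Real.dist_eq, abs_lt] at hz''
      constructor <;> linarith [hz''.1, hz''.2]
    have hmemσ' : ∀ σ ∈ uIoc (0:ℝ) s, ρf σ ∈ Icc (0:ℝ) (ρf s) := by
      intro σ hσ
      rw [uIoc_of_le h0s.le] at hσ
      exact ⟨hρf0 σ hσ.1.le, hρmono σ s hσ.1.le hσ.2⟩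
    have key := intervalIntegral.hasDerivAt_integral_of_dominated_loc_of_deriv_le
      (F := fun z'' σ => F (ρf σ, z'')) (F' := fun z'' σ => F' (ρf σ, z''))
      (x₀ := z') (s := Metric.ball z' (z'/2)) (bound := fun _ => C) (a := 0) (b := s) (μ := volume)
      (Metric.ball_mem_nhds _ (by positivity)) ?_ ?_ ?_ ?_ ?_ ?_
    · exact key.2
    · -- measurability of F (ρf ·, z'') for z'' near z'
      filter_upwards [IsOpen.mem_nhds isOpen_Ioi hz'] with z'' hz''
      rw [uIoc_of_le h0s.le]
      exact ((hcomp_cont F hFc z'' hz'').mono Ioc_subset_Icc_self).aestronglyMeasurable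
        measurableSet_Ioc
    · -- interval integrability of F (ρf ·, z')
      apply ContinuousOn.intervalIntegrable
      rw [uIcc_of_le h0s.le]
      exact hcomp_cont F hFc z' hz'
    · rw [uIoc_of_le h0s.le]
      exact ((hcomp_cont F' hF'c z' hz').mono Ioc_subset_Icc_self).aestronglyMeasurable
        measurableSet_Ioc
    · -- bound
      refine Filter.Eventually.of_forall (fun σ => ?_)
      intro hσ z'' hz''
      exact hC _ ⟨hmemσ' σ hσ, hball z'' hz''⟩
    · exact intervalIntegrable_const
    · -- differentiability
      refine Filter.Eventually.of_forall (fun σ => ?_)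
      intro hσ z'' hz''
      have hz''0 : 0 < z'' := lt_of_lt_of_le (by positivity) (hball z'' hz'').1
      have hmem : (ρf σ, z'') ∈ U r := by
        rw [uIoc_of_le h0s.le] at hσ
        exact hIoo σ ⟨hσ.1.le, hσ.2⟩ z'' hz''0
      exact hFD (ρf σ) z'' hmem
  -- apply to (ut, pz) and (pz, pzz)
  have hmain1 := hdom (ut v e) (pz v e) (utC2 he hC2).continuousOn (continuousOn_pz he hC2)
    (fun a b h => hasDerivAt_z he hC2 h)
  have hmain2 := hdom (pz v e) (pzz v e) (continuousOn_pz he hC2) (continuousOn_pzz he hC2)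
    (fun a b h => hasDerivAt_zz he hC2 h)
  intro z hz
  have h1 : ∀ z' ∈ Ioi (0:ℝ),
      deriv (fun z' : ℝ => ∫ σ in (0:ℝ)..s, rearr (Metric.ball 0 r) (fun x => v x z') σ) z'
      = ∫ σ in (0:ℝ)..s, pz v e (ρf σ, z') := by
    intro z' hz'
    rw [deriv_congr_of_eqOn isOpen_Ioi hGeq hz']
    exact (hmain1 z' hz').deriv
  refine ⟨h1 z hz, ?_⟩
  have h2 : deriv (deriv (fun z' : ℝ => ∫ σ in (0:ℝ)..s,
      rearr (Metric.ball 0 r) (fun x => v x z') σ)) z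
      = deriv (fun z' : ℝ => ∫ σ in (0:ℝ)..s, pz v e (ρf σ, z')) z :=
    deriv_congr_of_eqOn isOpen_Ioi (fun z' hz' => h1 z' hz') hz
  rw [h2]
  exact (hmain2 z hz).deriv

end RCE
namespace RCE
variable {N : ℕ} {r : ℝ} {v : Euc N → ℝ → ℝ} {e : Euc N}

set_option maxHeartbeats 1000000 in
lemma deriv_s
    (hC2 : ContDiffOn ℝ 2 (fun p : Euc N × ℝ => v p.1 p.2) (Metric.ball 0 r ×ˢ Ioi (0:ℝ)))
    (hrad : RadialDecr v)
    (hN : 0 < N) (hr : 0 < r) (he : ‖e‖ = 1)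
    (hzero : ∀ z : ℝ, 0 ≤ z → v (r • e) z = 0)
    {s z : ℝ} (h0s : 0 < s) (hsT : s < omegaN N * r ^ N) (hz : 0 < z) :
    deriv (deriv (fun s' : ℝ => ∫ σ in (0:ℝ)..s',
        rearr (Metric.ball 0 r) (fun x => v x z) σ)) s
      = pr v e ((s / omegaN N) ^ ((N:ℝ)⁻¹), z) *
        ((N:ℝ)⁻¹ * (s / omegaN N) ^ ((N:ℝ)⁻¹ - 1) * (omegaN N)⁻¹) := by
  have hω : 0 < omegaN N := omegaN_pos hN
  set ω := omegaN N with hωdef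
  set T := ω * r ^ N with hTdef
  have hT0 : 0 < T := by positivity
  set ρf : ℝ → ℝ := fun σ => (σ/ω) ^ ((N:ℝ)⁻¹) with hρf
  have hρf0 : ∀ σ : ℝ, 0 ≤ σ → 0 ≤ ρf σ := fun σ hσ => Real.rpow_nonneg (by positivity) _
  have hρlt : ∀ σ : ℝ, 0 ≤ σ → σ < T → ρf σ < r := by
    intro σ h1 h2
    calc ρf σ < ((ω * r^N)/ω) ^ ((N:ℝ)⁻¹) :=
        Real.rpow_lt_rpow (by positivity) ((div_lt_div_iff_of_pos_right hω).2 h2) (by positivity)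
      _ = r := by
        rw [mul_comm ω (r^N), mul_div_assoc, div_self hω.ne', mul_one, ← Real.rpow_natCast r N,
          ← Real.rpow_mul hr.le, mul_inv_cancel₀ (Nat.cast_ne_zero.2 hN.ne'), Real.rpow_one]
  have hρf_cont : Continuous ρf := by
    apply continuous_iff_continuousAt.2
    intro σ
    have h1 : ContinuousAt (fun x : ℝ => x ^ ((N:ℝ)⁻¹)) (σ/ω) :=
      Real.continuousAt_rpow_const _ _ (Or.inr (by positivity))
    exact ContinuousAt.comp (f := fun σ => σ/ω) (x := σ) h1 (by fun_prop)
  set k : ℝ → ℝ := fun σ => ut v e (ρf σ, z) with hk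
  have hkCA : ∀ σ' ∈ Ico (0:ℝ) T, ContinuousAt k σ' := by
    intro σ' hσ'
    have hmem : (ρf σ', z) ∈ U r :=
      ⟨⟨lt_of_lt_of_le (by linarith) (hρf0 σ' hσ'.1), hρlt σ' hσ'.1 hσ'.2⟩, hz⟩
    have h1 : ContinuousAt (ut v e) (ρf σ', z) :=
      (utC2 he hC2).continuousOn.continuousAt (isOpen_U.mem_nhds hmem)
    exact ContinuousAt.comp (x := σ') h1 ((hρf_cont.prodMk continuous_const).continuousAt)
  have hrearr : ∀ σ : ℝ, 0 ≤ σ → σ < T →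
      rearr (Metric.ball 0 r) (fun x => v x z) σ = k σ := by
    intro σ h1 h2
    have hcont : ContinuousOn (fun x : Euc N => v x z) (Metric.ball 0 r) := by
      have hmap : Continuous (fun x : Euc N => ((x, z) : Euc N × ℝ)) := by fun_prop
      exact hC2.continuousOn.comp hmap.continuousOn (fun x hx => ⟨hx, hz⟩)
    exact rearr_radial hN hr (fun x x' h => hrad z hz.le x x' h) hcont he
      (hzero z hz.le) (hρf0 σ h1) (hρlt σ h1 h2) (omega_rho_pow hN hω h1).symm
  have hHeq : EqOn (fun s' : ℝ => ∫ σ in (0:ℝ)..s', rearr (Metric.ball 0 r) (fun x => v x z) σ)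
      (fun s' : ℝ => ∫ σ in (0:ℝ)..s', k σ) (Ioo 0 T) := by
    intro s' hs'
    refine intervalIntegral.integral_congr ?_
    intro σ hσ
    rw [uIcc_of_le hs'.1.le] at hσ
    exact hrearr σ hσ.1 (lt_of_le_of_lt hσ.2 hs'.2)
  have hHD : ∀ s' ∈ Ioo (0:ℝ) T, HasDerivAt (fun u : ℝ => ∫ σ in (0:ℝ)..u, k σ) (k s') s' := by
    intro s' hs'
    refine intervalIntegral.integral_hasDerivAt_right ?_ ?_ (hkCA s' ⟨hs'.1.le, hs'.2⟩)
    · apply ContinuousOn.intervalIntegrable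
      rw [uIcc_of_le hs'.1.le]
      intro σ hσ
      exact (hkCA σ ⟨hσ.1, lt_of_le_of_lt hσ.2 hs'.2⟩).continuousWithinAt
    · exact ContinuousAt.stronglyMeasurableAtFilter isOpen_Ioo
        (fun σ hσ => hkCA σ ⟨hσ.1.le, hσ.2⟩) s' hs'
  have hd1 : ∀ s' ∈ Ioo (0:ℝ) T,
      deriv (fun s' : ℝ => ∫ σ in (0:ℝ)..s', rearr (Metric.ball 0 r) (fun x => v x z) σ) s'
        = k s' := by
    intro s' hs'
    rw [deriv_congr_of_eqOn isOpen_Ioo hHeq hs']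
    exact (hHD s' hs').deriv
  have hsmem : s ∈ Ioo (0:ℝ) T := ⟨h0s, hsT⟩
  rw [deriv_congr_of_eqOn isOpen_Ioo (fun s' hs' => hd1 s' hs') hsmem]
  -- derivative of k at s
  have hρfD : HasDerivAt ρf ((N:ℝ)⁻¹ * (s/ω) ^ ((N:ℝ)⁻¹ - 1) * ω⁻¹) s := by
    have h1 : HasDerivAt (fun x : ℝ => x ^ ((N:ℝ)⁻¹))
        ((N:ℝ)⁻¹ * (s/ω) ^ ((N:ℝ)⁻¹ - 1)) (s/ω) :=
      Real.hasDerivAt_rpow_const (Or.inl (by positivity))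
    have h2 : HasDerivAt (fun σ : ℝ => σ/ω) (1/ω) s := by
      simpa using (hasDerivAt_id s).div_const ω
    have := h1.comp s h2
    rw [one_div] at this; exact this
  have hmem : (ρf s, z) ∈ U r :=
    ⟨⟨lt_of_lt_of_le (by linarith) (hρf0 s h0s.le), hρlt s h0s.le hsT⟩, hz⟩
  have hkD : HasDerivAt k (pr v e (ρf s, z) * ((N:ℝ)⁻¹ * (s/ω) ^ ((N:ℝ)⁻¹ - 1) * ω⁻¹)) s :=
    (hasDerivAt_r he hC2 hmem).comp s hρfD
  exact hkD.deriv

set_option maxHeartbeats 1000000 in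
lemma ftc_phi
    (hC2 : ContDiffOn ℝ 2 (fun p : Euc N × ℝ => v p.1 p.2) (Metric.ball 0 r ×ˢ Ioi (0:ℝ)))
    (hN2 : 2 ≤ N) (hr : 0 < r) (he : ‖e‖ = 1)
    {s z A : ℝ} (h0s : 0 < s) (hsT : s < omegaN N * r ^ N) (hz : 0 < z)
    (hPDE : ∀ σ ∈ Ioo (0:ℝ) s,
      A * pzz v e ((σ / omegaN N) ^ ((N:ℝ)⁻¹), z)
        + prr v e ((σ / omegaN N) ^ ((N:ℝ)⁻¹), z)
        + ((N:ℝ) - 1) * (pr v e ((σ / omegaN N) ^ ((N:ℝ)⁻¹), z)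
            / (σ / omegaN N) ^ ((N:ℝ)⁻¹) ) = 0) :
    A * ∫ σ in (0:ℝ)..s, pzz v e ((σ / omegaN N) ^ ((N:ℝ)⁻¹), z)
      = -((N:ℝ) * omegaN N * ((s / omegaN N) ^ ((N:ℝ)⁻¹)) ^ (N - 1) *
          pr v e ((s / omegaN N) ^ ((N:ℝ)⁻¹), z)) := by
  have hN : 0 < N := by omega
  have hω : 0 < omegaN N := omegaN_pos hN
  set ω := omegaN N with hωdef
  set ρf : ℝ → ℝ := fun σ => (σ/ω) ^ ((N:ℝ)⁻¹) with hρf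
  have hρf0 : ∀ σ : ℝ, 0 ≤ σ → 0 ≤ ρf σ := fun σ hσ => Real.rpow_nonneg (by positivity) _
  have hρmono : ∀ σ τ : ℝ, 0 ≤ σ → σ ≤ τ → ρf σ ≤ ρf τ := fun σ τ h1 h2 =>
    Real.rpow_le_rpow (by positivity) (by gcongr) (by positivity)
  have hρs_lt : ρf s < r := by
    calc ρf s < ((ω * r^N)/ω) ^ ((N:ℝ)⁻¹) :=
        Real.rpow_lt_rpow (by positivity) ((div_lt_div_iff_of_pos_right hω).2 hsT) (by positivity)
      _ = r := by
        rw [mul_comm ω (r^N), mul_div_assoc, div_self hω.ne', mul_one, ← Real.rpow_natCast r N,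
          ← Real.rpow_mul hr.le, mul_inv_cancel₀ (Nat.cast_ne_zero.2 hN.ne'), Real.rpow_one]
  have hρf_cont : Continuous ρf := by
    apply continuous_iff_continuousAt.2
    intro σ
    have h1 : ContinuousAt (fun x : ℝ => x ^ ((N:ℝ)⁻¹)) (σ/ω) :=
      Real.continuousAt_rpow_const _ _ (Or.inr (by positivity))
    exact ContinuousAt.comp (f := fun σ => σ/ω) (x := σ) h1 (by fun_prop)
  have hIoo : ∀ σ ∈ Icc (0:ℝ) s, (ρf σ, z) ∈ U r := by
    intro σ hσ
    exact ⟨⟨lt_of_lt_of_le (by linarith) (hρf0 σ hσ.1),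
      lt_of_le_of_lt (hρmono σ s hσ.1 hσ.2) hρs_lt⟩, hz⟩
  have hcompc : ∀ (g : ℝ × ℝ → ℝ), ContinuousOn g (U r) →
      ContinuousOn (fun σ => g (ρf σ, z)) (Icc 0 s) := by
    intro g hg
    exact hg.comp ((hρf_cont.prodMk continuous_const).continuousOn) (fun σ hσ => hIoo σ hσ)
  set Φ : ℝ → ℝ := fun σ => (N:ℝ) * ω * ((ρf σ) ^ (N-1) * pr v e (ρf σ, z)) with hΦ
  have hΦcont : ContinuousOn Φ (Icc 0 s) := by
    have h1 : ContinuousOn (fun σ => pr v e (ρf σ, z)) (Icc 0 s) :=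
      hcompc (pr v e) (continuousOn_pr he hC2)
    exact continuousOn_const.mul (((hρf_cont.pow (N-1)).continuousOn).mul h1)
  have hΦD : ∀ σ ∈ Ioo (0:ℝ) s, HasDerivAt Φ (-(A * pzz v e (ρf σ, z))) σ := by
    intro σ hσ
    have hσ0 : 0 < σ := hσ.1
    have hρpos : 0 < ρf σ := Real.rpow_pos_of_pos (by positivity) _
    have hρD : HasDerivAt ρf ((N:ℝ)⁻¹ * (σ/ω) ^ ((N:ℝ)⁻¹ - 1) * ω⁻¹) σ := by
      have h1 : HasDerivAt (fun x : ℝ => x ^ ((N:ℝ)⁻¹))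
          ((N:ℝ)⁻¹ * (σ/ω) ^ ((N:ℝ)⁻¹ - 1)) (σ/ω) :=
        Real.hasDerivAt_rpow_const (Or.inl (by positivity))
      have h2 : HasDerivAt (fun τ : ℝ => τ/ω) (1/ω) σ := by
        simpa using (hasDerivAt_id σ).div_const ω
      have := h1.comp σ h2
      rw [one_div] at this; exact this
    set ρ' : ℝ := (N:ℝ)⁻¹ * (σ/ω) ^ ((N:ℝ)⁻¹ - 1) * ω⁻¹ with hρ'
    have hpow : HasDerivAt (fun τ => (ρf τ) ^ (N-1))
        (((N-1:ℕ):ℝ) * (ρf σ) ^ (N-1-1) * ρ') σ := hρD.pow (N-1)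
    have hmemσ : (ρf σ, z) ∈ U r := hIoo σ ⟨hσ.1.le, hσ.2.le⟩
    have hprD : HasDerivAt (fun τ => pr v e (ρf τ, z)) (prr v e (ρf σ, z) * ρ') σ :=
      (hasDerivAt_rr he hC2 hmemσ).comp σ hρD
    have htot := (hpow.mul hprD).const_mul ((N:ℝ) * ω)
    have hval : (N:ℝ) * ω * ((((N-1:ℕ):ℝ) * (ρf σ) ^ (N-1-1) * ρ') * pr v e (ρf σ, z)
        + (ρf σ) ^ (N-1) * (prr v e (ρf σ, z) * ρ'))
        = -(A * pzz v e (ρf σ, z)) := by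
      have hkey : (N:ℝ) * ω * ρ' * (ρf σ) ^ (N-1) = 1 := key_identity hN hω hσ0
      have hsplit : (ρf σ) ^ (N-1) = (ρf σ) ^ (N-2) * ρf σ := by
        rw [← pow_succ]
        congr 1
        omega
      have hsub : N - 1 - 1 = N - 2 := by omega
      have hkey2 : (N:ℝ) * ω * ρ' * (ρf σ) ^ (N-2) = 1 / ρf σ := by
        rw [eq_div_iff hρpos.ne']
        rw [hsplit] at hkey
        linear_combination hkey
      have hcast : ((N-1:ℕ):ℝ) = (N:ℝ) - 1 := by
        rw [Nat.cast_sub hN, Nat.cast_one]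
      have hpde := hPDE σ hσ
      rw [hsub, hcast]
      have hgoal : (N:ℝ) * ω * ((((N:ℝ) - 1) * (ρf σ) ^ (N-2) * ρ') * pr v e (ρf σ, z)
          + (ρf σ) ^ (N-1) * (prr v e (ρf σ, z) * ρ'))
          = prr v e (ρf σ, z) + ((N:ℝ) - 1) * (pr v e (ρf σ, z) / ρf σ) := by
        linear_combination prr v e (ρf σ, z) * hkey
          + ((N:ℝ) - 1) * pr v e (ρf σ, z) * hkey2
      rw [hgoal]
      linarith [hpde]
    rw [← hval]
    exact htot
  have hint : IntervalIntegrable (fun σ => -(A * pzz v e (ρf σ, z))) volume 0 s := by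
    apply ContinuousOn.intervalIntegrable
    rw [uIcc_of_le h0s.le]
    exact ((hcompc (pzz v e) (continuousOn_pzz he hC2)).const_smul A).neg
  have hftc := intervalIntegral.integral_eq_sub_of_hasDerivAt_of_le h0s.le hΦcont hΦD hint
  have hΦ0 : Φ 0 = 0 := by
    have : ρf 0 = 0 := by
      rw [hρf]
      simp only []
      rw [zero_div, Real.zero_rpow (by positivity)]
    rw [hΦ]
    simp only []
    rw [this, zero_pow (by omega : N - 1 ≠ 0)]
    ring
  rw [hΦ0, sub_zero] at hftc
  have hlhs : ∫ σ in (0:ℝ)..s, -(A * pzz v e (ρf σ, z))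
      = -(A * ∫ σ in (0:ℝ)..s, pzz v e (ρf σ, z)) := by
    rw [intervalIntegral.integral_neg, intervalIntegral.integral_const_mul]
  rw [hlhs] at hftc
  have hfin : A * ∫ σ in (0:ℝ)..s, pzz v e (ρf σ, z) = -(Φ s) := by linarith [hftc]
  rw [hfin]
  simp only [hΦ]
  ring
end RCE

open RCE in
set_option maxHeartbeats 2000000 in
theorem radial_concentration_equation
    {N : ℕ} (hN : 2 ≤ N) (α : ℝ) (hα : α ∈ Ioo (0 : ℝ) 2)
    (Ω : Set (Euc N)) (hΩo : IsOpen Ω) (hΩb : Bornology.IsBounded Ω)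
    (f : Euc N → ℝ) (hf : Measurable f)
    (v : Euc N → ℝ → ℝ)
    (hC2 : ContDiffOn ℝ 2 (fun p : Euc N × ℝ => v p.1 p.2) (symmBall Ω ×ˢ Ioi (0 : ℝ)))
    (hcont : ContinuousOn (fun p : Euc N × ℝ => v p.1 p.2)
      (closure (symmBall Ω ×ˢ Ioi (0 : ℝ))))
    (hrad : RadialDecr v)
    (hpde : ∀ x ∈ symmBall Ω, ∀ z ∈ Ioi (0 : ℝ),
      z ^ (2 * (α - 1) / α) * deriv (deriv (v x)) z + lapx v x z = 0)
    (hlateral : ∀ x ∈ frontier (symmBall Ω), ∀ z ∈ Ici (0 : ℝ), v x z = 0) :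
    (∀ s ∈ Ioo (0 : ℝ) (volume Ω).toReal, ∀ z ∈ Ioi (0 : ℝ),
      z ^ (2 * (α - 1) / α) *
          deriv (deriv fun z' : ℝ =>
            ∫ σ in (0 : ℝ)..s, rearr (symmBall Ω) (fun x => v x z') σ) z +
        (N : ℝ) ^ 2 * omegaN N ^ (2 / (N : ℝ)) * s ^ (2 - 2 / (N : ℝ)) *
          deriv (deriv fun s' : ℝ =>
            ∫ σ in (0 : ℝ)..s', rearr (symmBall Ω) (fun x => v x z) σ) s = 0) ∧
    ((∀ ε > (0 : ℝ), ∃ δ > (0 : ℝ), ∀ z ∈ Ioo (0 : ℝ) δ, ∀ x ∈ symmBall Ω,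
        |deriv (v x) z + α ^ (α - 1) * kappa α * schwarz Ω f x| < ε) →
      ∀ s ∈ Ioo (0 : ℝ) (volume Ω).toReal,
        Tendsto (fun z : ℝ =>
            deriv (fun z' : ℝ =>
              ∫ σ in (0 : ℝ)..s, rearr (symmBall Ω) (fun x => v x z') σ) z)
          (nhdsWithin 0 (Ioi 0))
          (nhds (-(α ^ (α - 1) * kappa α * ∫ σ in (0 : ℝ)..s, rearr Ω f σ)))) := by
  obtain ⟨hα0, hα2⟩ := hα
  have hN0 : 0 < N := by omega
  set i0 : Fin N := ⟨0, hN0⟩ with hi0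
  set e : Euc N := EuclideanSpace.single i0 (1:ℝ) with hedef
  have he : ‖e‖ = 1 := norm_single_one i0
  have hω : 0 < omegaN N := omegaN_pos hN0
  set T := (volume Ω).toReal with hTdef
  set r := ballRad Ω with hrdef
  have hT0 : 0 ≤ T := by rw [hTdef]; exact ENNReal.toReal_nonneg
  have hrT : omegaN N * r ^ N = T := by
    rw [hrdef, ballRad, ← hTdef]
    exact omega_rho_pow hN0 hω hT0
  have hsymm : symmBall Ω = Metric.ball (0 : Euc N) r := rfl
  have hC2' : ContDiffOn ℝ 2 (fun p : Euc N × ℝ => v p.1 p.2)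
      (Metric.ball 0 r ×ˢ Ioi (0:ℝ)) := hC2
  have hrpos : 0 < T → 0 < r := by
    intro hT
    rw [hrdef, ballRad, ← hTdef]
    exact Real.rpow_pos_of_pos (div_pos hT hω) _
  have hzero : 0 < r → ∀ z : ℝ, 0 ≤ z → v (r • e) z = 0 := by
    intro hr z hz
    refine hlateral (r • e) ?_ z hz
    rw [hsymm, frontier_ball (0 : Euc N) hr.ne', mem_sphere_zero_iff_norm]
    exact norm_smul_unit he hr.le
  have hρlt : ∀ σ : ℝ, 0 ≤ σ → σ < T → (σ / omegaN N) ^ ((N:ℝ)⁻¹) < r := by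
    intro σ h1 h2
    have hr : 0 < r := hrpos (lt_of_le_of_lt h1 h2)
    rw [← hrT] at h2
    calc (σ / omegaN N) ^ ((N:ℝ)⁻¹) < ((omegaN N * r^N)/omegaN N) ^ ((N:ℝ)⁻¹) :=
        Real.rpow_lt_rpow (by positivity) ((div_lt_div_iff_of_pos_right hω).2 h2) (by positivity)
      _ = r := by
        rw [mul_comm (omegaN N) (r^N), mul_div_assoc, div_self hω.ne', mul_one,
          ← Real.rpow_natCast r N, ← Real.rpow_mul hr.le,
          mul_inv_cancel₀ (Nat.cast_ne_zero.2 hN0.ne'), Real.rpow_one]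
  -- PDE in (ρ, z) coordinates
  have hPDEρ : ∀ s : ℝ, 0 < s → s < T → ∀ z : ℝ, 0 < z → ∀ σ ∈ Ioo (0:ℝ) s,
      z ^ (2*(α-1)/α) * pzz v e ((σ/omegaN N) ^ ((N:ℝ)⁻¹), z)
        + prr v e ((σ/omegaN N) ^ ((N:ℝ)⁻¹), z)
        + ((N:ℝ)-1) * (pr v e ((σ/omegaN N) ^ ((N:ℝ)⁻¹), z)
            / ((σ/omegaN N) ^ ((N:ℝ)⁻¹))) = 0 := by
    intro s h0s hsT z hz σ hσ
    have hr : 0 < r := hrpos (lt_trans h0s hsT)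
    set ρ := (σ/omegaN N) ^ ((N:ℝ)⁻¹) with hρdef
    have hρpos : 0 < ρ := Real.rpow_pos_of_pos (div_pos hσ.1 hω) _
    have hρr : ρ < r := hρlt σ hσ.1.le (lt_trans hσ.2 hsT)
    have hx : ρ • e ∈ symmBall Ω := by
      rw [hsymm, mem_ball_zero_iff, norm_smul_unit he hρpos.le]
      exact hρr
    have hpde' := hpde (ρ • e) hx z hz
    have hmem : ((ρ, z) : ℝ × ℝ) ∈ U r := ⟨⟨by linarith, hρr⟩, hz⟩
    rw [deriv_deriv_v_eq_pzz he hC2' hmem] at hpde'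
    have hlap := lapx_radial (i0 := i0) hN0 hC2' hrad he hρpos hρr hz
    rw [← hedef] at hlap
    rw [hlap] at hpde'
    linarith [hpde']
  constructor
  · -- Part 1
    intro s hs z hz
    obtain ⟨h0s, hsT⟩ := hs
    have hr : 0 < r := hrpos (lt_trans h0s hsT)
    have hsT' : s < omegaN N * r ^ N := by rw [hrT]; exact hsT
    rw [hsymm]
    have hdz := (derivs_z hC2' hrad hN0 hr he (hzero hr) h0s hsT' z hz).2
    have hds := deriv_s hC2' hrad hN0 hr he (hzero hr) h0s hsT' hz
    rw [hdz, hds]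
    have hftc := ftc_phi hC2' hN hr he h0s hsT' hz (A := z^(2*(α-1)/α))
      (hPDEρ s h0s hsT z hz)
    rw [hftc]
    have hk2 := key_identity2 hN0 hω h0s
    linear_combination pr v e ((s/omegaN N) ^ ((N:ℝ)⁻¹), z) * hk2
  · -- Part 2
    intro Hunif s hs
    obtain ⟨h0s, hsT⟩ := hs
    have hr : 0 < r := hrpos (lt_trans h0s hsT)
    have hsT' : s < omegaN N * r ^ N := by rw [hrT]; exact hsT
    set c : ℝ := α ^ (α - 1) * kappa α with hcdef
    have hcpos : 0 < c := by
      rw [hcdef, kappa]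
      have h1 : 0 < Real.Gamma (1 - α/2) := Real.Gamma_pos_of_pos (by linarith)
      have h2 : 0 < Real.Gamma (α/2) := Real.Gamma_pos_of_pos (by linarith)
      have h3 : 0 < (2:ℝ) ^ (1-α) := Real.rpow_pos_of_pos (by norm_num) _
      have h4 : 0 < α ^ (α-1) := Real.rpow_pos_of_pos hα0 _
      positivity
    set ρf : ℝ → ℝ := fun σ => (σ/omegaN N) ^ ((N:ℝ)⁻¹) with hρf
    have hρf0 : ∀ σ : ℝ, 0 ≤ σ → 0 ≤ ρf σ := fun σ hσ => Real.rpow_nonneg (by positivity) _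
    have hρmono : ∀ σ τ : ℝ, 0 ≤ σ → σ ≤ τ → ρf σ ≤ ρf τ := fun σ τ h1 h2 =>
      Real.rpow_le_rpow (by positivity) (by gcongr) (by positivity)
    have hρs_lt : ρf s < r := hρlt s h0s.le hsT
    have hρf_cont : Continuous ρf := by
      apply continuous_iff_continuousAt.2
      intro σ
      have h1 : ContinuousAt (fun x : ℝ => x ^ ((N:ℝ)⁻¹)) (σ/omegaN N) :=
        Real.continuousAt_rpow_const _ _ (Or.inr (by positivity))
      exact ContinuousAt.comp (f := fun σ => σ/omegaN N) (x := σ) h1 (by fun_prop)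
    have hIoo : ∀ σ ∈ Icc (0:ℝ) s, ∀ z : ℝ, 0 < z → ((ρf σ, z) : ℝ × ℝ) ∈ U r := by
      intro σ hσ z hz
      exact ⟨⟨lt_of_lt_of_le (by linarith) (hρf0 σ hσ.1),
        lt_of_le_of_lt (hρmono σ s hσ.1 hσ.2) hρs_lt⟩, hz⟩
    have hschwarz : ∀ σ ∈ Icc (0:ℝ) s, schwarz Ω f (ρf σ • e) = rearr Ω f σ := by
      intro σ hσ
      rw [schwarz, norm_smul_unit he (hρf0 σ hσ.1)]
      exact congrArg (rearr Ω f) (omega_rho_pow hN0 hω hσ.1)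
    have hunif' : ∀ ε : ℝ, 0 < ε → ∃ δ > 0, ∀ z ∈ Ioo (0:ℝ) δ, ∀ σ ∈ Icc (0:ℝ) s,
        |pz v e (ρf σ, z) + c * rearr Ω f σ| < ε := by
      intro ε hε
      obtain ⟨δ, hδ, hδ2⟩ := Hunif ε hε
      refine ⟨δ, hδ, fun z hzδ σ hσ => ?_⟩
      have hmem : ρf σ • e ∈ symmBall Ω := by
        rw [hsymm, mem_ball_zero_iff, norm_smul_unit he (hρf0 σ hσ.1)]
        exact lt_of_le_of_lt (hρmono σ s hσ.1 hσ.2) hρs_lt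
      have hb := hδ2 z hzδ (ρf σ • e) hmem
      rw [hschwarz σ hσ, deriv_v_eq_pz he hC2' (hIoo σ hσ z hzδ.1)] at hb
      exact hb
    -- boundedness of rearr Ω f
    obtain ⟨δ1, hδ1, h1⟩ := hunif' 1 one_pos
    set z1 : ℝ := δ1/2 with hz1
    have hz1pos : 0 < z1 := by rw [hz1]; linarith
    obtain ⟨C0, hC0⟩ : ∃ C0, ∀ p ∈ Icc (0:ℝ) (ρf s) ×ˢ Icc z1 z1, ‖pz v e p‖ ≤ C0 := by
      refine (isCompact_Icc.prod isCompact_Icc).exists_bound_of_continuousOn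
        ((continuousOn_pz he hC2').mono ?_)
      rintro ⟨a, b⟩ ⟨ha, hb⟩
      exact ⟨⟨lt_of_lt_of_le (by linarith) ha.1, lt_of_le_of_lt ha.2 hρs_lt⟩,
        lt_of_lt_of_le hz1pos hb.1⟩
    have hrfb : ∀ σ ∈ Icc (0:ℝ) s, |rearr Ω f σ| ≤ (1 + C0)/c := by
      intro σ hσ
      have h2 := h1 z1 ⟨hz1pos, by rw [hz1]; linarith⟩ σ hσ
      have h3 := hC0 (ρf σ, z1) ⟨⟨hρf0 σ hσ.1, hρmono σ s hσ.1 hσ.2⟩, left_mem_Icc.2 le_rfl⟩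
      rw [Real.norm_eq_abs] at h3
      rw [le_div_iff₀ hcpos]
      have h4 : |rearr Ω f σ| * c = |c * rearr Ω f σ| := by
        rw [abs_mul, abs_of_pos hcpos]; ring
      rw [h4]
      calc |c * rearr Ω f σ|
          = |(pz v e (ρf σ, z1) + c * rearr Ω f σ) - pz v e (ρf σ, z1)| := by ring_nf
        _ ≤ |pz v e (ρf σ, z1) + c * rearr Ω f σ| + |pz v e (ρf σ, z1)| := abs_sub _ _
        _ ≤ 1 + C0 := by linarith [h2.le, h3]
    have hrf_int : IntervalIntegrable (rearr Ω f) volume 0 s := by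
      rw [intervalIntegrable_iff, uIoc_of_le h0s.le]
      apply Measure.integrableOn_of_bounded (M := (1 + C0)/c)
      · exact measure_Ioc_lt_top.ne
      · exact (rearr_measurable Ω f).aestronglyMeasurable
      · rw [ae_restrict_iff' measurableSet_Ioc]
        exact Filter.Eventually.of_forall fun σ hσ => by
          rw [Real.norm_eq_abs]; exact hrfb σ ⟨hσ.1.le, hσ.2⟩
    have hpz_int : ∀ z : ℝ, 0 < z →
        IntervalIntegrable (fun σ => pz v e (ρf σ, z)) volume 0 s := by
      intro z hz
      apply ContinuousOn.intervalIntegrable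
      rw [uIcc_of_le h0s.le]
      exact (continuousOn_pz he hC2').comp
        ((hρf_cont.prodMk continuous_const).continuousOn)
        (fun σ hσ => hIoo σ hσ z hz)
    have hder : ∀ z ∈ Ioi (0:ℝ),
        deriv (fun z' : ℝ => ∫ σ in (0:ℝ)..s, rearr (symmBall Ω) (fun x => v x z') σ) z
          = ∫ σ in (0:ℝ)..s, pz v e (ρf σ, z) := by
      intro z hz
      rw [hsymm]
      exact (derivs_z hC2' hrad hN0 hr he (hzero hr) h0s hsT' z hz).1
    have htend : Tendsto (fun z : ℝ => ∫ σ in (0:ℝ)..s, pz v e (ρf σ, z))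
        (nhdsWithin 0 (Ioi 0)) (nhds (-(c * ∫ σ in (0:ℝ)..s, rearr Ω f σ))) := by
      rw [Metric.tendsto_nhdsWithin_nhds]
      intro ε hε
      obtain ⟨δ, hδ, hu⟩ := hunif' (ε/(2*(s+1))) (by positivity)
      refine ⟨δ, hδ, fun {z} hz hdist => ?_⟩
      have hzδ : z ∈ Ioo 0 δ :=
        ⟨hz, by rwa [Real.dist_eq, sub_zero, abs_of_pos hz] at hdist⟩
      have hbnd := hu z hzδ
      rw [Real.dist_eq]
      have hsplit : (∫ σ in (0:ℝ)..s, pz v e (ρf σ, z))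
          - (-(c * ∫ σ in (0:ℝ)..s, rearr Ω f σ))
          = ∫ σ in (0:ℝ)..s, (pz v e (ρf σ, z) + c * rearr Ω f σ) := by
        rw [intervalIntegral.integral_add (hpz_int z hz) (hrf_int.const_mul c),
          intervalIntegral.integral_const_mul]
        ring
      rw [hsplit]
      have hb : ‖∫ σ in (0:ℝ)..s, (pz v e (ρf σ, z) + c * rearr Ω f σ)‖
          ≤ ε/(2*(s+1)) * |s - 0| := by
        apply intervalIntegral.norm_integral_le_of_norm_le_const
        intro σ hσu
        rw [uIoc_of_le h0s.le] at hσu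
        rw [Real.norm_eq_abs]
        exact (hbnd σ ⟨hσu.1.le, hσu.2⟩).le
      rw [Real.norm_eq_abs] at hb
      calc |∫ σ in (0:ℝ)..s, (pz v e (ρf σ, z) + c * rearr Ω f σ)|
          ≤ ε/(2*(s+1)) * |s - 0| := hb
        _ < ε := by
          rw [sub_zero, abs_of_pos h0s]
          rw [div_mul_eq_mul_div, div_lt_iff₀ (by positivity)]
          nlinarith
    refine Filter.Tendsto.congr' ?_ htend
    refine eventuallyEq_nhdsWithin_of_eqOn ?_
    intro z hz
    exact (hder z hz).symm
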